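/- Let (V, ω) be a symplectic vector space, E = V ⊕ V*. Suppose S is an endomorphism of E that is skew-symmetric for b, satisfies S² = λ·id (λ = ±1), and commutes with I_{λℓ} (ℓ = ±1). Then S has the block form S(u + σ) = (Au + λℓ B(ω♭)^{-1}σ) + (ω♭ B u − A*σ), where A, B are endomorphisms of V satisfying λA² + ℓB² = id, AB + BA = 0, and ω♭A = −A*ω♭. -/

import Mathlib

/-- a `b`-skew-symmetric endomorphism `S` of `E = V ⊕ V*` with
`S² = λ·id` commuting with `I_{λℓ}` has the block form
`S(u+σ) = (Au + λℓ B (ω♭)⁻¹σ) + (ω♭Bu - A*σ)` with `λA² + ℓB² = id`,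
`AB + BA = 0`, and `ω♭A = -A*ω♭`. -/
theorem stmt15 (V : Type*) [AddCommGroup V] [Module ℝ V] [FiniteDimensional ℝ V]
    (ωb : V →ₗ[ℝ] Module.Dual ℝ V)
    (hωskew : ∀ u v, ωb u v = - ωb v u)
    (p : Module.Dual ℝ V →ₗ[ℝ] V)
    (hp1 : ∀ σ, ωb (p σ) = σ) (hp2 : ∀ u, p (ωb u) = u)
    (lam ℓ : ℝ) (hlam : lam = 1 ∨ lam = -1) (hℓ : ℓ = 1 ∨ ℓ = -1)
    (b : (V × Module.Dual ℝ V) → (V × Module.Dual ℝ V) → ℝ)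
    (hb : ∀ x y, b x y = y.2 x.1 + x.2 y.1)
    (I : (V × Module.Dual ℝ V) → (V × Module.Dual ℝ V))
    (hI : ∀ x, I x = ((lam * ℓ) • p x.2, ωb x.1))
    (S : Module.End ℝ (V × Module.Dual ℝ V))
    (hS2 : ∀ x, S (S x) = lam • x)
    (hskew : ∀ x y, b (S x) y = - b x (S y))
    (hcomm : ∀ x, S (I x) = I (S x)) :
    ∃ A B : V →ₗ[ℝ] V,
      (∀ x : V × Module.Dual ℝ V,
        S x = (A x.1 + (lam * ℓ) • B (p x.2), ωb (B x.1) - A.dualMap x.2)) ∧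
      (∀ v, lam • A (A v) + ℓ • B (B v) = v) ∧
      (∀ v, A (B v) + B (A v) = 0) ∧
      (∀ v, ωb (A v) = - A.dualMap (ωb v)) := by
  classical
  have hlam2 : lam * lam = 1 := by rcases hlam with h | h <;> simp [h]
  set A : V →ₗ[ℝ] V :=
    (LinearMap.fst ℝ V (Module.Dual ℝ V)).comp
      (S.comp (LinearMap.inl ℝ V (Module.Dual ℝ V))) with hAdef
  set Bm : V →ₗ[ℝ] V :=
    p.comp ((LinearMap.snd ℝ V (Module.Dual ℝ V)).comp
      (S.comp (LinearMap.inl ℝ V (Module.Dual ℝ V)))) with hBdef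
  have hA1 : ∀ u : V, (S (u, 0)).1 = A u := fun u => rfl
  have hA2 : ∀ u : V, (S (u, 0)).2 = ωb (Bm u) := by
    intro u
    simp only [hBdef, LinearMap.comp_apply, LinearMap.snd_apply, LinearMap.inl_apply,
      hp1]
  have hSu0 : ∀ u : V, S (u, 0) = (A u, ωb (Bm u)) := by
    intro u
    rw [Prod.ext_iff]
    exact ⟨hA1 u, hA2 u⟩
  -- S on (0, ωb u)
  have hS0 : ∀ u : V, S (0, ωb u) = ((lam * ℓ) • Bm u, ωb (A u)) := by
    intro u
    have h := hcomm (u, 0)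
    rw [hI, hI] at h
    simp only [map_zero, smul_zero] at h
    rw [hSu0 u] at h
    rw [h]
    ext
    · simp [hp2]
    · rfl
  -- the relation ωb A = - A* ωb
  have h4 : ∀ v, ωb (A v) = - A.dualMap (ωb v) := by
    intro v
    apply LinearMap.ext
    intro u
    have h := hskew (u, 0) (0, ωb v)
    rw [hb, hb] at h
    rw [hSu0 u, hS0 v] at h
    simp only [map_zero, LinearMap.zero_apply, add_zero, zero_add] at h
    -- h : ωb v (A u) = - (ωb (A v)) u  (roughly)
    simp only [LinearMap.neg_apply, LinearMap.dualMap_apply]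
    have h' : ωb v (A u) = -(ωb (A v)) u := by
      simpa using h
    linarith [h']
  -- S on (0, σ) for general σ
  have hS0' : ∀ σ : Module.Dual ℝ V,
      S (0, σ) = ((lam * ℓ) • Bm (p σ), - A.dualMap σ) := by
    intro σ
    have := hS0 (p σ)
    rw [hp1] at this
    rw [this]
    ext
    · rfl
    · have := h4 (p σ)
      rw [hp1] at this
      exact LinearMap.congr_fun this _
  -- block formula
  have hblock : ∀ x : V × Module.Dual ℝ V,
      S x = (A x.1 + (lam * ℓ) • Bm (p x.2), ωb (Bm x.1) - A.dualMap x.2) := by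
    intro x
    have hx : x = ((x.1, 0) : V × Module.Dual ℝ V) + (0, x.2) := by
      ext <;> simp
    rw [hx, map_add, hSu0, hS0']
    ext
    · simp
    · simp [sub_eq_add_neg]
  refine ⟨A, Bm, hblock, ?_, ?_, h4⟩
  · intro v
    have h := hS2 (v, 0)
    rw [hblock (v, 0)] at h
    simp only [map_zero, smul_zero, add_zero, sub_zero] at h
    rw [hblock (A v, ωb (Bm v))] at h
    have h1 := congrArg Prod.fst h
    simp only [hp2] at h1
    -- h1 : A (A v) + (lam*ℓ) • Bm (Bm v) = lam • v
    have h2 := congrArg (fun w => lam • w) h1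
    simp only [smul_add, smul_smul, hlam2] at h2
    have : lam * (lam * ℓ) = ℓ := by rw [← mul_assoc, hlam2, one_mul]
    rw [this] at h2
    simpa [smul_smul, hlam2] using h2
  · intro v
    have h := hS2 (v, 0)
    rw [hblock (v, 0)] at h
    simp only [map_zero, smul_zero, add_zero, sub_zero] at h
    rw [hblock (A v, ωb (Bm v))] at h
    have h2 := congrArg Prod.snd h
    simp only [hp2] at h2
    -- h2 : ωb (Bm (A v)) - A.dualMap (ωb (Bm v)) = lam • 0 = 0
    have h3 : ωb (Bm (A v)) + ωb (A (Bm v)) = 0 := by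
      have hdm : A.dualMap (ωb (Bm v)) = - ωb (A (Bm v)) := by
        rw [h4 (Bm v), neg_neg]
      rw [hdm, sub_neg_eq_add] at h2
      simpa using h2
    have h5 : ωb (Bm (A v) + A (Bm v)) = 0 := by rw [map_add]; exact h3
    have := congrArg p h5
    rw [hp2, map_zero] at this
    rw [add_comm] at this
    exact this
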